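/- The series ∑_{n=0}^∞ (−1)ⁿ/((2n+1)³·C(2n,n)) equals −2i·∫₀¹ [Li₂(i·x/(1+x²)) − Li₂(−i·x/(1+x²))]/(1+x²) dx, where the integral of the complex-valued integrand is taken over the real interval [0,1]. -/

import Mathlib

open MeasureTheory

/-- Polylogarithm of a complex argument, defined by its convergent series. -/
noncomputable def cLi (s : ℕ) (z : ℂ) : ℂ := ∑' n : ℕ, z ^ (n + 1) / ((n : ℂ) + 1) ^ s

lemma summable_cLi {z : ℂ} (hz : ‖z‖ < 1) :
    Summable (fun n : ℕ => z ^ (n + 1) / ((n : ℂ) + 1) ^ 2) := by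
  apply Summable.of_norm_bounded (summable_geometric_of_lt_one (norm_nonneg z) hz)
  intro n
  rw [norm_div, norm_pow, norm_pow]
  have h1 : (1:ℝ) ≤ ‖(n:ℂ) + 1‖ ^ 2 := by
    have : (1:ℝ) ≤ ‖(n:ℂ) + 1‖ := by
      rw [show ((n:ℂ)+1) = ((n+1 : ℕ) : ℂ) by push_cast; ring, Complex.norm_natCast]
      exact_mod_cast Nat.one_le_iff_ne_zero.2 (Nat.succ_ne_zero n)
    nlinarith
  have h0 : (0:ℝ) ≤ ‖z‖ ^ (n+1) := pow_nonneg (norm_nonneg z) _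
  calc ‖z‖ ^ (n+1) / ‖(n:ℂ)+1‖^2 ≤ ‖z‖^(n+1) / 1 := div_le_div_of_nonneg_left h0 one_pos h1
      _ ≤ ‖z‖ ^ n := by
        rw [div_one, pow_succ]
        nlinarith [pow_nonneg (norm_nonneg z) n, norm_nonneg z, hz.le]

lemma norm_z_le (x : ℝ) : ‖(x:ℂ) / (1 + (x:ℂ)^2)‖ ≤ 1/2 := by
  have h : (0:ℝ) < 1 + x^2 := by positivity
  have : ((1:ℂ) + (x:ℂ)^2) = ((1 + x^2 : ℝ) : ℂ) := by push_cast; ring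
  rw [this, norm_div, Complex.norm_real, Complex.norm_real, Real.norm_eq_abs,
    Real.norm_eq_abs, abs_of_pos h, div_le_iff₀ h]
  nlinarith [abs_nonneg x, sq_abs x, sq_nonneg (|x| - 1)]

lemma one_add_sq_ne (x : ℝ) : (1 : ℂ) + (x:ℂ)^2 ≠ 0 := by
  have h : (0:ℝ) < 1 + x^2 := by positivity
  have : ((1:ℂ) + (x:ℂ)^2) = ((1 + x^2 : ℝ) : ℂ) := by push_cast; ring
  rw [this]
  exact_mod_cast h.ne'

/-- the real series for the integrand -/
lemma inj2 : Function.Injective (fun k : ℕ => 2*k) := fun a b h => by simp only [] at h; omega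
lemma inj2' : Function.Injective (fun k : ℕ => 2*k+1) := fun a b h => by simp only [] at h; omega

noncomputable def G (x : ℝ) : ℝ :=
  ∑' k : ℕ, (-1)^k * (x^(2*k+1) / ((2*(k:ℝ)+1)^2 * (1+x^2)^(2*k+2)))

lemma pointwise (x : ℝ) :
    (cLi 2 (Complex.I * x / (1 + (x : ℂ) ^ 2))
        - cLi 2 (-(Complex.I * x) / (1 + (x : ℂ) ^ 2))) / (1 + (x : ℂ) ^ 2)
      = 2 * Complex.I * ((G x : ℝ) : ℂ) := by
  set z : ℂ := (x:ℂ) / (1 + (x:ℂ)^2) with hzdef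
  have hne := one_add_sq_ne x
  have hzn : ‖Complex.I * z‖ < 1 := by
    rw [norm_mul, Complex.norm_I, one_mul]
    exact (norm_z_le x).trans_lt (by norm_num)
  have hzn' : ‖-(Complex.I * z)‖ < 1 := by rwa [norm_neg]
  have harg1 : Complex.I * (x:ℂ) / (1 + (x:ℂ)^2) = Complex.I * z := mul_div_assoc _ _ _
  have harg2 : -(Complex.I * (x:ℂ)) / (1 + (x:ℂ)^2) = -(Complex.I * z) := by
    rw [neg_div, mul_div_assoc]
  rw [harg1, harg2]
  have hdiff : cLi 2 (Complex.I * z) - cLi 2 (-(Complex.I * z))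
      = ∑' n : ℕ, ((Complex.I*z)^(n+1) - (-(Complex.I*z))^(n+1)) / ((n:ℂ)+1)^2 := by
    rw [cLi, cLi, ← Summable.tsum_sub (summable_cLi hzn) (summable_cLi hzn')]
    exact tsum_congr fun n => div_sub_div_same _ _ _
  obtain ⟨f, hf⟩ : ∃ g : ℕ → ℂ,
      g = fun n : ℕ => ((Complex.I*z)^(n+1) - (-(Complex.I*z))^(n+1)) / ((n:ℂ)+1)^2 :=
    ⟨_, rfl⟩
  rw [← hf] at hdiff
  have hsumf : Summable f := by
    rw [hf]
    exact ((summable_cLi hzn).sub (summable_cLi hzn')).congr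
      (fun n => div_sub_div_same _ _ _)
  have heven : Summable (fun k => f (2*k)) :=
    hsumf.comp_injective inj2
  have hodd : Summable (fun k => f (2*k+1)) :=
    hsumf.comp_injective inj2'
  have hoddzero : ∑' k : ℕ, f (2*k+1) = 0 := by
    have hz0 : ∀ k : ℕ, f (2*k+1) = 0 := by
      intro k
      simp only [hf]
      rw [show 2*k+1+1 = 2*(k+1) by ring]
      rw [Even.neg_pow ⟨k+1, by ring⟩]
      simp
    rw [tsum_congr hz0, tsum_zero]
  have key : ∑' n : ℕ, f n = 2 * Complex.I * ((∑' k : ℕ,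
      (-1)^k * (x^(2*k+1) / ((2*(k:ℝ)+1)^2 * (1+x^2)^(2*k+1))) : ℝ) : ℂ) := by
    rw [← tsum_even_add_odd heven hodd, hoddzero, add_zero]
    rw [Complex.ofReal_tsum, ← tsum_mul_left]
    refine tsum_congr fun k => ?_
    simp only [hf]
    have h1 : (-(Complex.I*z))^(2*k+1) = -((Complex.I*z)^(2*k+1)) :=
      Odd.neg_pow ⟨k, by ring⟩ _
    have h2 : (Complex.I*z)^(2*k+1) = Complex.I^(2*k+1) * z^(2*k+1) := mul_pow _ _ _
    have h3 : Complex.I^(2*k+1) = (-1)^k * Complex.I := by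
      rw [pow_succ, pow_mul, Complex.I_sq]
    have h4 : z^(2*k+1) = (x:ℂ)^(2*k+1)/(1+(x:ℂ)^2)^(2*k+1) := div_pow _ _ _
    have h5 : ((2*(k:ℕ)+1 : ℕ) : ℂ) + 1 = 2*(k:ℂ)+1 + 1 := by push_cast; ring
    have hk : (2*(k:ℂ)+1) ≠ 0 := by
      exact_mod_cast (Nat.cast_ne_zero (R := ℂ)).2 (by omega : (2*k+1 : ℕ) ≠ 0)
    have hpne : ((1:ℂ)+(x:ℂ)^2)^(2*k+1) ≠ 0 := pow_ne_zero _ hne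
    rw [h1, sub_neg_eq_add, h2, h3, h4]
    push_cast
    field_simp
    ring
  rw [hdiff, key, mul_div_assoc]
  congr 1
  rw [div_eq_iff hne]
  rw [show ((1:ℂ) + (x:ℂ)^2) = ((1 + x^2 : ℝ) : ℂ) by push_cast; ring]
  rw [← Complex.ofReal_mul]
  congr 1
  rw [G, ← tsum_mul_right]
  apply tsum_congr fun k => ?_
  have h : (0:ℝ) < 1 + x^2 := by positivity
  have h1 : (1 + x^2) ≠ 0 := h.ne'
  have h2 : (2*(k:ℝ)+1) ≠ 0 := by positivity
  field_simp
  ring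

lemma prod_asc (n : ℕ) : ∀ m : ℕ, ∏ j ∈ Finset.range m, (n + j) = n.ascFactorial m
  | 0 => by simp
  | m + 1 => by rw [Finset.prod_range_succ, prod_asc n m, Nat.ascFactorial_succ, mul_comm]

lemma beta_nat (k : ℕ) : ∫ t in (0:ℝ)..1, t^k * (1-t)^k
    = (k.factorial : ℝ)^2 / ((2*k+1).factorial : ℝ) := by
  have h1 : Complex.betaIntegral ((k:ℂ)+1) ((k:ℂ)+1)
      = ((∫ t in (0:ℝ)..1, t^k * (1-t)^k : ℝ) : ℂ) := by
    rw [Complex.betaIntegral, ← intervalIntegral.integral_ofReal]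
    apply intervalIntegral.integral_congr
    intro x _
    push_cast
    rw [add_sub_cancel_right, Complex.cpow_natCast, Complex.cpow_natCast]
  have h2 := Complex.betaIntegral_eval_nat_add_one_right
    (u := (k:ℂ)+1) (by simp [Complex.add_re]; positivity) k
  have h3 : ∏ j ∈ Finset.range (k+1), ((k:ℂ)+1+j)
      = (((k+1).ascFactorial (k+1) : ℕ) : ℂ) := by
    rw [← prod_asc]
    push_cast
    ring_nf
  have h4 : (k.factorial : ℂ) * ((k+1).ascFactorial (k+1) : ℕ) = ((2*k+1).factorial : ℂ) := by
    rw [← Nat.cast_mul, Nat.factorial_mul_ascFactorial]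
    norm_num
    ring_nf
  have hasc : ((((k+1).ascFactorial (k+1) : ℕ)) : ℂ) ≠ 0 := by
    exact_mod_cast Nat.cast_ne_zero.2 (by positivity : 0 < (k+1).ascFactorial (k+1)).ne'
  rw [h3] at h2
  rw [h2] at h1
  have : ((k.factorial : ℝ)^2 / ((2*k+1).factorial : ℝ) : ℂ)
      = (k.factorial : ℂ) / (((k+1).ascFactorial (k+1) : ℕ) : ℂ) := by
    have hfk : ((2*k+1).factorial : ℂ) ≠ 0 := Nat.cast_ne_zero.2 (Nat.factorial_ne_zero _)
    push_cast
    rw [div_eq_div_iff hfk hasc, ← h4]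
    push_cast
    ring
  rw [← this] at h1
  exact_mod_cast h1.symm

lemma hasDeriv_phi (x : ℝ) :
    HasDerivAt (fun y : ℝ => y^2/(1+y^2)) (2*x/(1+x^2)^2) x := by
  have h1 : HasDerivAt (fun y:ℝ => y^2) (2*x) x := by simpa using hasDerivAt_pow 2 x
  have h2 : HasDerivAt (fun y:ℝ => 1+y^2) (2*x) x := by
    simpa using (hasDerivAt_pow 2 x).const_add 1
  have h3 : (1:ℝ) + x^2 ≠ 0 := by positivity
  have := h1.div h2 h3
  refine this.congr_deriv ?_
  ring

lemma J_eq (k : ℕ) : ∫ x in (0:ℝ)..1, x^(2*k+1)/(1+x^2)^(2*k+2)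
    = (1/2) * ∫ t in (0:ℝ)..(1/2:ℝ), t^k * (1-t)^k := by
  have hg : Continuous (fun t : ℝ => (1/2) * (t^k * (1-t)^k)) := by continuity
  have hf' : ContinuousOn (fun x : ℝ => 2*x/(1+x^2)^2) (Set.uIcc 0 1) := by
    apply Continuous.continuousOn
    apply Continuous.div (by continuity) (by continuity)
    intro x; positivity
  have key := intervalIntegral.integral_comp_smul_deriv
    (f := fun y : ℝ => y^2/(1+y^2)) (f' := fun x : ℝ => 2*x/(1+x^2)^2)
    (g := fun t : ℝ => (1/2) * (t^k * (1-t)^k)) (a := 0) (b := 1)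
    (fun x _ => hasDeriv_phi x) hf' hg
  simp only [] at key
  norm_num at key
  rw [← key]
  apply intervalIntegral.integral_congr
  intro x _
  have hx : (0:ℝ) < 1 + x^2 := by positivity
  simp only [smul_eq_mul, Function.comp]
  rw [show (1 : ℝ) - x^2/(1+x^2) = 1/(1+x^2) by field_simp; ring]
  rw [div_pow, div_pow, one_pow]
  field_simp
  ring

lemma symm_half (k : ℕ) : ∫ t in (0:ℝ)..(1/2:ℝ), t^k * (1-t)^k
    = (1/2) * ∫ t in (0:ℝ)..1, t^k * (1-t)^k := by
  have hc : Continuous (fun t : ℝ => t^k * (1-t)^k) := by continuity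
  have hadd : (∫ t in (0:ℝ)..(1/2:ℝ), t^k * (1-t)^k)
      + ∫ t in (1/2:ℝ)..1, t^k * (1-t)^k = ∫ t in (0:ℝ)..1, t^k * (1-t)^k :=
    intervalIntegral.integral_add_adjacent_intervals
      (hc.intervalIntegrable _ _) (hc.intervalIntegrable _ _)
  have hrefl : ∫ t in (1/2:ℝ)..1, t^k * (1-t)^k = ∫ t in (0:ℝ)..(1/2:ℝ), t^k * (1-t)^k := by
    have := intervalIntegral.integral_comp_sub_left
      (a := 1/2) (b := 1) (fun t : ℝ => t^k * (1-t)^k) 1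
    norm_num at this
    rw [← this]
    apply intervalIntegral.integral_congr
    intro x _
    ring_nf
  rw [hrefl] at hadd
  linarith
lemma r_le_half {x : ℝ} (hx : 0 ≤ x) : x/(1+x^2) ≤ 1/2 := by
  rw [div_le_iff₀ (by positivity)]
  nlinarith [sq_nonneg (x-1)]

lemma Fcont (k : ℕ) :
    Continuous (fun x : ℝ => (-1)^k * (x^(2*k+1) / ((2*(k:ℝ)+1)^2 * (1+x^2)^(2*k+2)))) := by
  apply Continuous.mul continuous_const
  apply Continuous.div (continuous_pow _) (by continuity)
  intro x; positivity

lemma Fbound (k : ℕ) {x : ℝ} (hx0 : 0 ≤ x) :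
    ‖(-1:ℝ)^k * (x^(2*k+1) / ((2*(k:ℝ)+1)^2 * (1+x^2)^(2*k+2)))‖ ≤ (1/2:ℝ)^k := by
  have hpos : (0:ℝ) < 1 + x^2 := by positivity
  rw [norm_mul, norm_pow, norm_neg, norm_one, one_pow, one_mul, Real.norm_eq_abs,
    abs_of_nonneg (by positivity)]
  have e1 : (1:ℝ) ≤ (2*(k:ℝ)+1)^2 := by nlinarith [Nat.cast_nonneg (α := ℝ) k]
  have e2 : (1+x^2)^(2*k+1) ≤ (1+x^2)^(2*k+2) :=
    pow_le_pow_right₀ (by nlinarith) (by omega)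
  have e3 : (1+x^2)^(2*k+1) ≤ (2*(k:ℝ)+1)^2 * (1+x^2)^(2*k+2) := by
    nlinarith [pow_pos hpos (2*k+2), pow_pos hpos (2*k+1)]
  calc x^(2*k+1) / ((2*(k:ℝ)+1)^2 * (1+x^2)^(2*k+2))
      ≤ x^(2*k+1) / (1+x^2)^(2*k+1) :=
        div_le_div_of_nonneg_left (by positivity) (pow_pos hpos _) e3
    _ = (x/(1+x^2))^(2*k+1) := (div_pow _ _ _).symm
    _ ≤ (1/2:ℝ)^(2*k+1) := pow_le_pow_left₀ (by positivity) (r_le_half hx0) _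
    _ ≤ (1/2:ℝ)^k := pow_le_pow_of_le_one (by norm_num) (by norm_num) (by omega)

lemma integral_G_swap : ∫ x in (0:ℝ)..1, G x
    = ∑' k : ℕ, ∫ x in (0:ℝ)..1,
        (-1)^k * (x^(2*k+1) / ((2*(k:ℝ)+1)^2 * (1+x^2)^(2*k+2))) := by
  have hle : (0:ℝ) ≤ 1 := zero_le_one
  simp only [intervalIntegral.integral_of_le hle]
  simp only [G]
  refine (MeasureTheory.integral_tsum_of_summable_integral_norm (fun k => ?_) ?_).symm
  · exact ((Fcont k).integrableOn_Ioc)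
  · apply Summable.of_nonneg_of_le
      (fun k => integral_nonneg fun a => norm_nonneg _)
      (fun k => ?_) (summable_geometric_of_lt_one (by norm_num) (by norm_num : (1/2:ℝ) < 1))
    have hint : IntegrableOn (fun a : ℝ =>
        ‖(-1:ℝ)^k * (a^(2*k+1) / ((2*(k:ℝ)+1)^2 * (1+a^2)^(2*k+2)))‖)
        (Set.Ioc (0:ℝ) 1) := ((Fcont k).norm.integrableOn_Ioc)
    calc ∫ a in Set.Ioc (0:ℝ) 1,
          ‖(-1:ℝ)^k * (a^(2*k+1) / ((2*(k:ℝ)+1)^2 * (1+a^2)^(2*k+2)))‖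
        ≤ ∫ _ in Set.Ioc (0:ℝ) 1, (1/2:ℝ)^k :=
          setIntegral_mono_on hint (integrableOn_const (by simp))
            measurableSet_Ioc (fun x hx => Fbound k hx.1.le)
      _ = (1/2:ℝ)^k := by simp [Real.volume_Ioc]

theorem chen_series_two_integral_rep :
    ((∑' n : ℕ, (-1) ^ n / ((2 * (n : ℝ) + 1) ^ 3 * (Nat.centralBinom n : ℝ)) : ℝ) : ℂ) =
      -2 * Complex.I * ∫ x in (0 : ℝ)..1,
        (cLi 2 (Complex.I * x / (1 + (x : ℂ) ^ 2))
          - cLi 2 (-(Complex.I * x) / (1 + (x : ℂ) ^ 2))) / (1 + (x : ℂ) ^ 2) := by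
  symm
  have step1 : (-2 * Complex.I * ∫ x in (0 : ℝ)..1,
        (cLi 2 (Complex.I * x / (1 + (x : ℂ) ^ 2))
          - cLi 2 (-(Complex.I * x) / (1 + (x : ℂ) ^ 2))) / (1 + (x : ℂ) ^ 2))
      = -2 * Complex.I * ∫ x in (0:ℝ)..1, 2 * Complex.I * ((G x : ℝ) : ℂ) := by
    congr 1
    exact intervalIntegral.integral_congr (fun x _ => pointwise x)
  rw [step1, intervalIntegral.integral_const_mul, intervalIntegral.integral_ofReal]
  have step2 : -2 * Complex.I * (2 * Complex.I * ((∫ x in (0:ℝ)..1, G x : ℝ) : ℂ))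
      = (((4 : ℝ) * ∫ x in (0:ℝ)..1, G x : ℝ) : ℂ) := by
    push_cast
    have := Complex.I_mul_I
    ring_nf
    rw [Complex.I_sq]
    ring
  rw [step2]
  congr 1
  rw [integral_G_swap, ← tsum_mul_left]
  refine tsum_congr fun k => ?_
  have hFk : (∫ x in (0:ℝ)..1, (-1)^k * (x^(2*k+1) / ((2*(k:ℝ)+1)^2 * (1+x^2)^(2*k+2))))
      = ((-1:ℝ)^k/(2*(k:ℝ)+1)^2) * ∫ x in (0:ℝ)..1, x^(2*k+1)/(1+x^2)^(2*k+2) := by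
    rw [← intervalIntegral.integral_const_mul]
    refine intervalIntegral.integral_congr (fun x _ => ?_)
    have d1 : ((2*(k:ℝ)+1)^2) ≠ 0 := by positivity
    have d2 : ((1+x^2)^(2*k+2) : ℝ) ≠ 0 := by positivity
    field_simp
  rw [hFk, J_eq, symm_half, beta_nat]
  have hC : (Nat.centralBinom k : ℝ) * ((k.factorial:ℝ) * (k.factorial:ℝ))
      = ((2*k).factorial : ℝ) := by
    have h := Nat.choose_mul_factorial_mul_factorial (show k ≤ 2*k by omega)
    rw [show 2*k-k = k by omega] at h
    rw [Nat.centralBinom]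
    exact_mod_cast (by rw [← h]; ring : ((2*k).choose k) * (k.factorial * k.factorial) = (2*k).factorial)
  have hfac : ((2*k+1).factorial : ℝ) = (2*(k:ℝ)+1) * ((2*k).factorial : ℝ) := by
    rw [show 2*k+1 = (2*k)+1 from rfl, Nat.factorial_succ]
    push_cast
    ring
  have h1 : (2*(k:ℝ)+1) ≠ 0 := by positivity
  have hC0 : (Nat.centralBinom k : ℝ) ≠ 0 :=
    Nat.cast_ne_zero.2 (Nat.centralBinom_pos k).ne'
  have hf0 : ((2*k).factorial : ℝ) ≠ 0 := Nat.cast_ne_zero.2 (Nat.factorial_ne_zero _)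
  have hk0 : ((k.factorial : ℝ)) ≠ 0 := Nat.cast_ne_zero.2 (Nat.factorial_ne_zero _)
  rw [hfac, ← hC]
  field_simp
  ring
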